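/- Let Y_0, Y_1, Y_2 be positive real numbers. Then the function W = (W_0,W_1,W_2) ↦ e^{−(W_0 Y_0 + W_1 Y_1 + W_2 Y_2)} is integrable over the cone {W ∈ ℝ^3 : W_0 ≥ 0, W_1 ≥ 0, W_2 ≥ 0, W_0 + W_1 ≥ W_2} with respect to Lebesgue measure, and the integral equals (Y_0 + Y_1 + Y_2) / ((Y_0 + Y_2)(Y_1 + Y_2) Y_0 Y_1). -/

import Mathlib

open scoped BigOperators
open MeasureTheory

namespace Stmt9Aux

open Real Set MeasureTheory

lemma hIexp {c : ℝ} (hc : 0 < c) :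
    IntegrableOn (fun x => Real.exp (-(c*x))) (Set.Ici 0) := by
  rw [integrableOn_Ici_iff_integrableOn_Ioi]
  simpa [neg_mul] using exp_neg_integrableOn_Ioi 0 hc

lemma hVexp {c : ℝ} (hc : 0 < c) :
    ∫ x in Set.Ici (0:ℝ), Real.exp (-(c*x)) = 1/c := by
  rw [MeasureTheory.integral_Ici_eq_integral_Ioi,
    integral_comp_mul_left_Ioi (fun x => Real.exp (-x)) 0 hc]
  simp [integral_exp_neg_Ioi, integral_exp_Iic_zero, one_div]

lemma hInt (k T : ℝ) (hk : k ≠ 0) :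
    ∫ c in (0:ℝ)..T, Real.exp (-(k*c)) = (1 - Real.exp (-(k*T)))/k := by
  have : ∀ c : ℝ, -(k*c) = (-k)*c := fun c => by ring
  simp_rw [this]
  rw [intervalIntegral.integral_comp_mul_left Real.exp (neg_ne_zero.mpr hk)]
  simp [integral_exp]
  rw [eq_div_iff hk]
  field_simp
  ring

noncomputable def e3 : (ℝ × (ℝ × ℝ)) ≃ᵐ (Fin 3 → ℝ) :=
  ((MeasurableEquiv.refl ℝ).prodCongr (MeasurableEquiv.finTwoArrow).symm).trans
    (MeasurableEquiv.piFinSuccAbove (fun _ : Fin 3 => ℝ) 0).symm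

lemma e3_apply₀ (a b c : ℝ) : e3 (a,(b,c)) 0 = a := by
  simp [e3, MeasurableEquiv.piFinSuccAbove, MeasurableEquiv.finTwoArrow,
    MeasurableEquiv.prodCongr, Equiv.prodCongr, MeasurableEquiv.piFinTwo]

lemma e3_apply₁ (a b c : ℝ) : e3 (a,(b,c)) 1 = b := by
  simp [e3, MeasurableEquiv.piFinSuccAbove, MeasurableEquiv.finTwoArrow,
    MeasurableEquiv.prodCongr, Equiv.prodCongr, MeasurableEquiv.piFinTwo]

lemma e3_apply₂ (a b c : ℝ) : e3 (a,(b,c)) 2 = c := by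
  simp [e3, MeasurableEquiv.piFinSuccAbove, MeasurableEquiv.finTwoArrow,
    MeasurableEquiv.prodCongr, Equiv.prodCongr, MeasurableEquiv.piFinTwo]

lemma e3_mp : MeasurePreserving e3 volume volume :=
  ((volume_preserving_piFinSuccAbove (fun _ : Fin 3 => ℝ) 0).symm _).comp
    ((MeasurePreserving.id volume).prod ((volume_preserving_finTwoArrow ℝ).symm _))

def U (a : ℝ) : Set (ℝ × ℝ) := {q | 0 ≤ q.1 ∧ 0 ≤ q.2 ∧ q.2 ≤ a + q.1}

lemma hU (a : ℝ) : MeasurableSet (U a) := by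
  unfold U
  apply MeasurableSet.inter (measurableSet_le measurable_const measurable_fst)
  exact MeasurableSet.inter (measurableSet_le measurable_const measurable_snd)
    (measurableSet_le measurable_snd (measurable_const.add measurable_fst))

def S' : Set (ℝ × ℝ × ℝ) := {p | 0 ≤ p.1 ∧ 0 ≤ p.2.1 ∧ 0 ≤ p.2.2 ∧ p.2.2 ≤ p.1 + p.2.1}

lemma hS' : MeasurableSet S' := by
  unfold S'
  apply MeasurableSet.inter (measurableSet_le measurable_const measurable_fst)
  apply MeasurableSet.inter (measurableSet_le measurable_const (measurable_fst.comp measurable_snd))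
  exact MeasurableSet.inter
    (measurableSet_le measurable_const (measurable_snd.comp measurable_snd))
    (measurableSet_le (measurable_snd.comp measurable_snd)
      (measurable_fst.add (measurable_fst.comp measurable_snd)))

variable {Y₀ Y₁ Y₂ : ℝ}

lemma L2 (h₁ : 0 < Y₁) (h₂ : 0 < Y₂) :
    IntegrableOn (fun q : ℝ × ℝ => Real.exp (-(Y₁*q.1)) * Real.exp (-(Y₂*q.2)))
      (Ici 0 ×ˢ Ici 0) := by
  rw [IntegrableOn, Measure.volume_eq_prod, ← Measure.prod_restrict]
  exact (hIexp h₁).mul_prod (hIexp h₂)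

lemma key_int (h₀ : 0 < Y₀) (h₁ : 0 < Y₁) (h₂ : 0 < Y₂) :
    IntegrableOn (fun p : ℝ × ℝ × ℝ => Real.exp (-(p.1*Y₀ + p.2.1*Y₁ + p.2.2*Y₂))) S' := by
  have hfun : (fun p : ℝ × ℝ × ℝ => Real.exp (-(p.1*Y₀ + p.2.1*Y₁ + p.2.2*Y₂))) =
      fun p => Real.exp (-(Y₀*p.1)) * (Real.exp (-(Y₁*p.2.1)) * Real.exp (-(Y₂*p.2.2))) := by
    funext p
    rw [← Real.exp_add, ← Real.exp_add]
    congr 1; ring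
  rw [hfun]
  have hsub : S' ⊆ (Ici 0) ×ˢ ((Ici 0) ×ˢ (Ici 0)) := fun p hp => ⟨hp.1, hp.2.1, hp.2.2.1⟩
  refine IntegrableOn.mono_set ?_ hsub
  rw [IntegrableOn, Measure.volume_eq_prod, ← Measure.prod_restrict]
  exact (hIexp h₀).mul_prod (L2 h₁ h₂)

lemma inner_c (h₂ : 0 < Y₂) {a b : ℝ} (ha : 0 ≤ a) (hb : 0 ≤ b) :
    ∫ c in Icc (0:ℝ) (a+b), Real.exp (-(a*Y₀ + b*Y₁ + c*Y₂)) =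
      Real.exp (-(a*Y₀ + b*Y₁)) * ((1 - Real.exp (-(Y₂*(a+b))))/Y₂) := by
  have h : ∀ c : ℝ, Real.exp (-(a*Y₀ + b*Y₁ + c*Y₂)) =
      Real.exp (-(a*Y₀ + b*Y₁)) * Real.exp (-(Y₂*c)) := by
    intro c
    rw [← Real.exp_add]
    congr 1; ring
  simp_rw [h]
  rw [MeasureTheory.integral_const_mul, MeasureTheory.integral_Icc_eq_integral_Ioc,
    ← intervalIntegral.integral_of_le (by positivity : (0:ℝ) ≤ a+b), hInt _ _ (ne_of_gt h₂)]

lemma mid_b (h₀ : 0 < Y₀) (h₁ : 0 < Y₁) (h₂ : 0 < Y₂) {a : ℝ} (ha : 0 ≤ a) :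
    ∫ q in U a, Real.exp (-(a*Y₀ + q.1*Y₁ + q.2*Y₂)) =
      Real.exp (-(a*Y₀))/Y₂ * (1/Y₁) - Real.exp (-(a*(Y₀+Y₂)))/Y₂ * (1/(Y₁+Y₂)) := by
  have hIa : IntegrableOn (fun q : ℝ × ℝ => Real.exp (-(a*Y₀ + q.1*Y₁ + q.2*Y₂))) (U a) := by
    have hfun : (fun q : ℝ × ℝ => Real.exp (-(a*Y₀ + q.1*Y₁ + q.2*Y₂))) =
        fun q => Real.exp (-(a*Y₀)) * (Real.exp (-(Y₁*q.1)) * Real.exp (-(Y₂*q.2))) := by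
      funext q
      rw [← Real.exp_add, ← Real.exp_add]
      congr 1; ring
    rw [hfun]
    have hsub : U a ⊆ Ici 0 ×ˢ Ici 0 := fun q hq => ⟨hq.1, hq.2.1⟩
    have h5 : IntegrableOn
        (fun q : ℝ × ℝ => Real.exp (-(a*Y₀)) * (Real.exp (-(Y₁*q.1)) * Real.exp (-(Y₂*q.2))))
        (Ici 0 ×ˢ Ici 0) := (L2 h₁ h₂).const_mul _
    exact h5.mono_set hsub
  rw [← MeasureTheory.integral_indicator (hU a), Measure.volume_eq_prod,
    MeasureTheory.integral_prod _ (by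
      rw [integrable_indicator_iff (hU a)]
      rw [← Measure.volume_eq_prod]; exact hIa)]
  have step : ∀ b : ℝ,
      (∫ c, (U a).indicator (fun q : ℝ × ℝ => Real.exp (-(a*Y₀ + q.1*Y₁ + q.2*Y₂))) (b, c)) =
      (Ici (0:ℝ)).indicator
        (fun b => Real.exp (-(a*Y₀ + b*Y₁)) * ((1 - Real.exp (-(Y₂*(a+b))))/Y₂)) b := by
    intro b
    by_cases hb : (0:ℝ) ≤ b
    · rw [Set.indicator_of_mem (Set.mem_Ici.mpr hb), ← inner_c h₂ ha hb,
        ← MeasureTheory.integral_indicator measurableSet_Icc]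
      congr 1
      funext c
      by_cases hc : c ∈ Icc (0:ℝ) (a+b)
      · rw [Set.indicator_of_mem hc, Set.indicator_of_mem]
        exact ⟨hb, hc.1, hc.2⟩
      · rw [Set.indicator_of_notMem hc, Set.indicator_of_notMem]
        intro h
        exact hc ⟨h.2.1, h.2.2⟩
    · rw [Set.indicator_of_notMem (by simpa using hb)]
      have h0 : ∀ c : ℝ,
          (U a).indicator (fun q : ℝ × ℝ => Real.exp (-(a*Y₀ + q.1*Y₁ + q.2*Y₂))) (b, c) = 0 :=
        fun c => Set.indicator_of_notMem (fun h => hb h.1) _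
      simp only [h0, MeasureTheory.integral_zero]
  simp_rw [step]
  rw [MeasureTheory.integral_indicator measurableSet_Ici]
  have split : ∀ b ∈ Ici (0:ℝ),
      Real.exp (-(a*Y₀ + b*Y₁)) * ((1 - Real.exp (-(Y₂*(a+b))))/Y₂) =
      (Real.exp (-(a*Y₀))/Y₂) * Real.exp (-(Y₁*b)) -
        (Real.exp (-(a*(Y₀+Y₂)))/Y₂) * Real.exp (-((Y₁+Y₂)*b)) := by
    intro b _
    have e1 : Real.exp (-(a*Y₀ + b*Y₁)) * Real.exp (-(Y₂*(a+b))) =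
        Real.exp (-(a*(Y₀+Y₂))) * Real.exp (-((Y₁+Y₂)*b)) := by
      rw [← Real.exp_add, ← Real.exp_add]
      congr 1; ring
    have e2 : Real.exp (-(a*Y₀ + b*Y₁)) = Real.exp (-(a*Y₀)) * Real.exp (-(Y₁*b)) := by
      rw [← Real.exp_add]
      congr 1; ring
    have e3 : Real.exp (-(a*Y₀ + b*Y₁)) * ((1 - Real.exp (-(Y₂*(a+b))))/Y₂) =
        (Real.exp (-(a*Y₀ + b*Y₁)) - Real.exp (-(a*Y₀ + b*Y₁)) * Real.exp (-(Y₂*(a+b))))/Y₂ := by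
      ring
    rw [e3, e1, e2, sub_div]
    ring
  rw [setIntegral_congr_fun measurableSet_Ici split,
    MeasureTheory.integral_sub ((hIexp h₁).const_mul _) ((hIexp (add_pos h₁ h₂)).const_mul _),
    MeasureTheory.integral_const_mul, MeasureTheory.integral_const_mul,
    hVexp h₁, hVexp (add_pos h₁ h₂)]

lemma key_val (h₀ : 0 < Y₀) (h₁ : 0 < Y₁) (h₂ : 0 < Y₂) :
    ∫ p in S', Real.exp (-(p.1*Y₀ + p.2.1*Y₁ + p.2.2*Y₂)) =
      (Y₀ + Y₁ + Y₂) / ((Y₀ + Y₂) * (Y₁ + Y₂) * Y₀ * Y₁) := by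
  rw [← MeasureTheory.integral_indicator hS', Measure.volume_eq_prod,
    MeasureTheory.integral_prod _ (by
      rw [integrable_indicator_iff hS']
      rw [← Measure.volume_eq_prod]; exact key_int h₀ h₁ h₂)]
  have step : ∀ a : ℝ,
      (∫ q, S'.indicator (fun p : ℝ × ℝ × ℝ => Real.exp (-(p.1*Y₀ + p.2.1*Y₁ + p.2.2*Y₂))) (a, q)) =
      (Ici (0:ℝ)).indicator (fun a => ∫ q in U a, Real.exp (-(a*Y₀ + q.1*Y₁ + q.2*Y₂))) a := by
    intro a
    by_cases ha : (0:ℝ) ≤ a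
    · rw [Set.indicator_of_mem (Set.mem_Ici.mpr ha), ← MeasureTheory.integral_indicator (hU a)]
      congr 1
      funext q
      by_cases hq : q ∈ U a
      · rw [Set.indicator_of_mem hq, Set.indicator_of_mem]
        exact ⟨ha, hq.1, hq.2.1, hq.2.2⟩
      · rw [Set.indicator_of_notMem hq, Set.indicator_of_notMem]
        intro h
        exact hq ⟨h.2.1, h.2.2.1, h.2.2.2⟩
    · rw [Set.indicator_of_notMem (by simpa using ha)]
      have h0 : ∀ q : ℝ × ℝ,
          S'.indicator (fun p : ℝ × ℝ × ℝ => Real.exp (-(p.1*Y₀ + p.2.1*Y₁ + p.2.2*Y₂))) (a, q) = 0 :=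
        fun q => Set.indicator_of_notMem (fun h => ha h.1) _
      simp only [h0, MeasureTheory.integral_zero]
  simp_rw [step]
  rw [MeasureTheory.integral_indicator measurableSet_Ici,
    setIntegral_congr_fun measurableSet_Ici (fun a ha => mid_b h₀ h₁ h₂ ha)]
  have split2 : ∀ a ∈ Ici (0:ℝ),
      Real.exp (-(a*Y₀))/Y₂ * (1/Y₁) - Real.exp (-(a*(Y₀+Y₂)))/Y₂ * (1/(Y₁+Y₂)) =
      (1/(Y₂*Y₁)) * Real.exp (-(Y₀*a)) - (1/(Y₂*(Y₁+Y₂))) * Real.exp (-((Y₀+Y₂)*a)) := by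
    intro a _
    rw [show a*Y₀ = Y₀*a by ring, show a*(Y₀+Y₂) = (Y₀+Y₂)*a by ring]
    have hY1 : Y₁ ≠ 0 := ne_of_gt h₁
    have hY2 : Y₂ ≠ 0 := ne_of_gt h₂
    have hY12 : Y₁ + Y₂ ≠ 0 := by positivity
    field_simp
  rw [setIntegral_congr_fun measurableSet_Ici split2,
    MeasureTheory.integral_sub ((hIexp h₀).const_mul _) ((hIexp (add_pos h₀ h₂)).const_mul _),
    MeasureTheory.integral_const_mul, MeasureTheory.integral_const_mul,
    hVexp h₀, hVexp (add_pos h₀ h₂)]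
  have hY01 : Y₀ + Y₂ ≠ 0 := by positivity
  have hY12 : Y₁ + Y₂ ≠ 0 := by positivity
  field_simp
  ring

end Stmt9Aux

/-- **Laplace transform over the dual cone of a quadrilateral.**
For positive reals `Y₀, Y₁, Y₂`, the function `W ↦ e^{-(W₀Y₀ + W₁Y₁ + W₂Y₂)}` is
integrable over the cone `{W ∈ ℝ³ : W₀, W₁, W₂ ≥ 0, W₀ + W₁ ≥ W₂}` and the integral
equals `(Y₀ + Y₁ + Y₂)/((Y₀ + Y₂)(Y₁ + Y₂) Y₀ Y₁)`. -/
theorem stmt_9 (Y₀ Y₁ Y₂ : ℝ) (h₀ : 0 < Y₀) (h₁ : 0 < Y₁) (h₂ : 0 < Y₂) :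
    IntegrableOn
      (fun W : Fin 3 → ℝ => Real.exp (-(W 0 * Y₀ + W 1 * Y₁ + W 2 * Y₂)))
      {W : Fin 3 → ℝ | 0 ≤ W 0 ∧ 0 ≤ W 1 ∧ 0 ≤ W 2 ∧ W 2 ≤ W 0 + W 1} ∧
    ∫ W in {W : Fin 3 → ℝ | 0 ≤ W 0 ∧ 0 ≤ W 1 ∧ 0 ≤ W 2 ∧ W 2 ≤ W 0 + W 1},
        Real.exp (-(W 0 * Y₀ + W 1 * Y₁ + W 2 * Y₂)) =
      (Y₀ + Y₁ + Y₂) / ((Y₀ + Y₂) * (Y₁ + Y₂) * Y₀ * Y₁) := by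
  classical
  open Stmt9Aux in
  set F : (Fin 3 → ℝ) → ℝ := fun W => Real.exp (-(W 0 * Y₀ + W 1 * Y₁ + W 2 * Y₂)) with hF
  set S : Set (Fin 3 → ℝ) := {W | 0 ≤ W 0 ∧ 0 ≤ W 1 ∧ 0 ≤ W 2 ∧ W 2 ≤ W 0 + W 1} with hS
  have hpre : Stmt9Aux.e3 ⁻¹' S = Stmt9Aux.S' := by
    ext ⟨a, b, c⟩
    simp only [Set.mem_preimage, hS, Set.mem_setOf_eq, Stmt9Aux.S',
      Stmt9Aux.e3_apply₀ a b c, Stmt9Aux.e3_apply₁ a b c, Stmt9Aux.e3_apply₂ a b c]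
  have hcomp : (F ∘ Stmt9Aux.e3) =
      fun p : ℝ × ℝ × ℝ => Real.exp (-(p.1*Y₀ + p.2.1*Y₁ + p.2.2*Y₂)) := by
    funext p
    obtain ⟨a, b, c⟩ := p
    simp only [Function.comp_apply, hF, Stmt9Aux.e3_apply₀ a b c, Stmt9Aux.e3_apply₁ a b c,
      Stmt9Aux.e3_apply₂ a b c]
  have emb := Stmt9Aux.e3.measurableEmbedding
  constructor
  · have h1 := (Stmt9Aux.e3_mp.restrict_preimage_emb emb S).integrable_comp_emb emb (g := F)
    rw [IntegrableOn, ← h1, hpre, hcomp]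
    exact Stmt9Aux.key_int h₀ h₁ h₂
  · have hval := Stmt9Aux.e3_mp.setIntegral_preimage_emb emb F S
    rw [← hval, hpre]
    calc (∫ p in Stmt9Aux.S', F (Stmt9Aux.e3 p))
        = ∫ p in Stmt9Aux.S', Real.exp (-(p.1*Y₀ + p.2.1*Y₁ + p.2.2*Y₂)) := by
          exact congrArg (fun f => ∫ p in Stmt9Aux.S', f p) hcomp
      _ = (Y₀ + Y₁ + Y₂) / ((Y₀ + Y₂) * (Y₁ + Y₂) * Y₀ * Y₁) :=
          Stmt9Aux.key_val h₀ h₁ h₂
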